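/- Let α > 0, C > 0, n ≥ 1, and let π : ℝ → [0,∞) be measurable with π = 0 on (−∞,0] and lim_{x→∞} π(x)e^{αx} = C. Let μ be a finite Borel measure on ℝ with μ((−∞,0]) = 0 and μ([n,∞)) = 0. Then limsup_{x→∞} (1/π(x)) ∫_0^x μ((x−z,∞)) π(z) dz ≤ n μ(ℝ) e^{αn}; in particular this limsup is finite. -/

import Mathlib

open MeasureTheory Set Filter
open scoped ENNReal

/-- if the jump measure has support bounded above by `n`, then the
ratio `(μ̄ₛ*π)(x)/π(x)` is asymptotically bounded by `n μ(ℝ) e^{αn}`. -/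
theorem limsup_tail_convolution_ratio_le
    (α C : ℝ) (hα : 0 < α) (hC : 0 < C)
    (n : ℕ) (hn : 1 ≤ n)
    (π : ℝ → ℝ) (hπ_meas : Measurable π) (hπ_nonneg : ∀ x, 0 ≤ π x)
    (hπ_zero : ∀ x ≤ 0, π x = 0)
    (hlim : Tendsto (fun x => π x * Real.exp (α * x)) atTop (nhds C))
    (μ : Measure ℝ) [IsFiniteMeasure μ] (hμ : μ (Iic 0) = 0)
    (hμn : μ (Ici (n : ℝ)) = 0) :
    Filter.limsup
        (fun x => (∫⁻ z in Ioo 0 x, μ (Ioi (x - z)) * ENNReal.ofReal (π z))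
          / ENNReal.ofReal (π x)) atTop
      ≤ (n : ℝ≥0∞) * μ univ * ENNReal.ofReal (Real.exp (α * n)) := by
  set M := (μ univ).toReal with hM
  have hμuniv : μ univ = ENNReal.ofReal M := by
    rw [hM, ENNReal.ofReal_toReal (measure_ne_top μ univ)]
  have hM0 : 0 ≤ M := ENNReal.toReal_nonneg
  have hn1 : (1 : ℝ) ≤ (n : ℝ) := by exact_mod_cast hn
  set B := (n : ℝ) * M * Real.exp (α * n) with hB
  have hB0 : 0 ≤ B := by positivity
  have hRHS : (n : ℝ≥0∞) * μ univ * ENNReal.ofReal (Real.exp (α * n))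
      = ENNReal.ofReal B := by
    rw [hμuniv, ← ENNReal.ofReal_natCast n, ← ENNReal.ofReal_mul (by positivity),
      ← ENNReal.ofReal_mul (by positivity)]
  rw [hRHS]
  have key : ∀ K : ℝ, B < K →
      Filter.limsup
        (fun x => (∫⁻ z in Ioo 0 x, μ (Ioi (x - z)) * ENNReal.ofReal (π z))
          / ENNReal.ofReal (π x)) atTop ≤ ENNReal.ofReal K := by
    intro K hK
    have hK0 : 0 < K := lt_of_le_of_lt hB0 hK
    set δ := C * (K - B) / (2 * (B + K)) with hδdef
    have hBK : 0 < B + K := by linarith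
    have hδpos : 0 < δ := div_pos (mul_pos hC (by linarith)) (by linarith)
    have hδeq : δ * (B + K) = C * (K - B) / 2 := by
      field_simp [hδdef]
      have h : δ * (2 * (B + K)) = C * (K - B) := by
        rw [hδdef]; exact div_mul_cancel₀ _ (mul_pos two_pos hBK).ne'
      linear_combination h
    have hδC : δ < C := by
      rw [hδdef, div_lt_iff₀ (by linarith)]
      nlinarith
    have hkey_ineq : B * (C + δ) ≤ K * (C - δ) := by nlinarith
    obtain ⟨N, hN⟩ := Metric.tendsto_atTop.mp hlim δ hδpos
    set X := max N 0 with hX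
    have hX0 : (0 : ℝ) ≤ X := le_max_right N 0
    have hup : ∀ z, X ≤ z → π z ≤ (C + δ) * Real.exp (-(α * z)) := by
      intro z hz
      have h1 := hN z (le_trans (le_max_left N 0) hz)
      rw [Real.dist_eq, abs_lt] at h1
      have h2 : π z * Real.exp (α * z) ≤ C + δ := by linarith [h1.2]
      have h3 : 0 < Real.exp (-(α * z)) := Real.exp_pos _
      have := mul_le_mul_of_nonneg_right h2 h3.le
      rwa [mul_assoc, ← Real.exp_add, add_neg_cancel, Real.exp_zero, mul_one] at this
    have hlow : ∀ z, X ≤ z → (C - δ) * Real.exp (-(α * z)) ≤ π z := by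
      intro z hz
      have h1 := hN z (le_trans (le_max_left N 0) hz)
      rw [Real.dist_eq, abs_lt] at h1
      have h2 : C - δ ≤ π z * Real.exp (α * z) := by linarith [h1.1]
      have h3 : 0 < Real.exp (-(α * z)) := Real.exp_pos _
      have := mul_le_mul_of_nonneg_right h2 h3.le
      rwa [mul_assoc, ← Real.exp_add, add_neg_cancel, Real.exp_zero, mul_one] at this
    have hev : ∀ᶠ x in atTop,
        (∫⁻ z in Ioo 0 x, μ (Ioi (x - z)) * ENNReal.ofReal (π z))
          / ENNReal.ofReal (π x) ≤ ENNReal.ofReal K := by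
      filter_upwards [eventually_ge_atTop (X + n)] with x hx
      have hxn : X ≤ x - n := by linarith
      have hxX : X ≤ x := by linarith
      have hx0 : 0 < x := by linarith
      have hπx : (C - δ) * Real.exp (-(α * x)) ≤ π x := hlow x hxX
      have hπx0 : 0 < π x := lt_of_lt_of_le (mul_pos (by linarith) (Real.exp_pos _)) hπx
      rw [ENNReal.div_le_iff (ENNReal.ofReal_pos.mpr hπx0).ne' ENNReal.ofReal_ne_top]
      set c0 := μ univ * ENNReal.ofReal ((C + δ) *
        (Real.exp (α * n) * Real.exp (-(α * x)))) with hc0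
      have hptwise : ∀ z ∈ Ioo (0:ℝ) x,
          μ (Ioi (x - z)) * ENNReal.ofReal (π z)
            ≤ (Ioi (x - (n:ℝ))).indicator (fun _ => c0) z := by
        intro z hz
        by_cases hzc : x - (n : ℝ) < z
        · simp only [Set.indicator_apply, mem_Ioi, if_pos hzc]
          refine mul_le_mul' (measure_mono (subset_univ _)) ?_
          apply ENNReal.ofReal_le_ofReal
          have hzX : X ≤ z := by linarith
          calc π z ≤ (C + δ) * Real.exp (-(α * z)) := hup z hzX
            _ ≤ (C + δ) * (Real.exp (α * n) * Real.exp (-(α * x))) := by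
                rw [← Real.exp_add]
                apply mul_le_mul_of_nonneg_left _ (by linarith)
                apply Real.exp_le_exp.mpr
                nlinarith
        · simp only [Set.indicator_apply, mem_Ioi, if_neg hzc]
          have hsub : Ioi (x - z) ⊆ Ici (n : ℝ) := by
            intro y hy
            simp only [mem_Ioi] at hy
            simp only [mem_Ici]
            push_neg at hzc
            linarith
          have : μ (Ioi (x - z)) = 0 := measure_mono_null hsub hμn
          simp [this]
      calc (∫⁻ z in Ioo 0 x, μ (Ioi (x - z)) * ENNReal.ofReal (π z))
          ≤ ∫⁻ z in Ioo 0 x, (Ioi (x - (n:ℝ))).indicator (fun _ => c0) z :=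
            lintegral_mono_ae ((ae_restrict_iff' measurableSet_Ioo).mpr
              (ae_of_all _ hptwise))
        _ = c0 * volume (Ioi (x - (n:ℝ)) ∩ Ioo 0 x) := by
            rw [lintegral_indicator measurableSet_Ioi, setLIntegral_const,
              Measure.restrict_apply measurableSet_Ioi]
        _ ≤ c0 * volume (Ioo (x - (n:ℝ)) x) := by
            refine mul_le_mul_right (measure_mono ?_) _
            rintro y ⟨hy1, hy2⟩
            exact ⟨hy1, hy2.2⟩
        _ = c0 * ENNReal.ofReal n := by
            rw [Real.volume_Ioo]
            congr 1
            ring_nf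
        _ = ENNReal.ofReal (M * ((C + δ) *
              (Real.exp (α * n) * Real.exp (-(α * x)))) * n) := by
            rw [hc0, hμuniv, ← ENNReal.ofReal_mul hM0,
              ← ENNReal.ofReal_mul (by positivity)]
        _ ≤ ENNReal.ofReal (K * π x) := by
            apply ENNReal.ofReal_le_ofReal
            have h1 : M * ((C + δ) * (Real.exp (α * n) * Real.exp (-(α * x)))) * n
                = B * (C + δ) * Real.exp (-(α * x)) := by rw [hB]; ring
            rw [h1]
            have h2 : B * (C + δ) * Real.exp (-(α * x))
                ≤ K * (C - δ) * Real.exp (-(α * x)) :=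
              mul_le_mul_of_nonneg_right hkey_ineq (Real.exp_pos _).le
            have h3 : K * ((C - δ) * Real.exp (-(α * x))) ≤ K * π x :=
              mul_le_mul_of_nonneg_left hπx hK0.le
            nlinarith
        _ = ENNReal.ofReal K * ENNReal.ofReal (π x) :=
            ENNReal.ofReal_mul hK0.le
    exact limsup_le_of_le (by isBoundedDefault) hev
  refine ENNReal.le_of_forall_pos_le_add fun ε hε _ ↦ ?_
  have hε' : (0 : ℝ) < (ε : ℝ) := hε
  calc Filter.limsup _ atTop ≤ ENNReal.ofReal (B + ε / 2) := key _ (by linarith)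
    _ ≤ ENNReal.ofReal B + ENNReal.ofReal ((ε : ℝ) / 2) := ENNReal.ofReal_add_le
    _ ≤ ENNReal.ofReal B + ε := by
        gcongr
        rw [ENNReal.ofReal_le_iff_le_toReal (by simp)]
        simp only [ENNReal.coe_toReal]
        linarith
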